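/- arXiv:1302.6447 — 2 statements merged into one kernel-verified Lean document; each statement's English description precedes it below -/
import Mathlib

section
/- Let X be a Fréchet sequence space in which the finite sequences form a dense subset, and let B_w : X → X be a weighted backward shift. If for every continuous seminorm p on X the set {k ≥ 0 : p(e_k) = 0} contains arbitrarily long intervals of consecutive integers, then B_w possesses a hypercyclic subspace of type 2. -/
set_option linter.unusedSectionVars false
set_option maxHeartbeats 1000000

open Filter Topology

/-- The kernel of a seminorm, as a submodule. -/
def Seminorm.kerSubmodule {𝕜 X : Type*} [NormedField 𝕜] [AddCommGroup X] [Module 𝕜 X]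
    (p : Seminorm 𝕜 X) : Submodule 𝕜 X where
  carrier := {x | p x = 0}
  zero_mem' := map_zero p
  add_mem' := by
    intro a b ha hb
    simp only [Set.mem_setOf_eq] at *
    exact le_antisymm (by simpa [ha, hb] using map_add_le_add p a b) (apply_nonneg p _)
  smul_mem' := by
    intro c x hx
    simp only [Set.mem_setOf_eq] at *
    simp [map_smul_eq_mul, hx]

namespace WS

lemma mem_ker {𝕜 X : Type*} [NormedField 𝕜] [AddCommGroup X] [Module 𝕜 X]
    {p : Seminorm 𝕜 X} {x : X} : x ∈ p.kerSubmodule ↔ p x = 0 := Iff.rfl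

/-- All the data of the construction. -/
structure Ctx (𝕜 X : Type*) [RCLike 𝕜]
    [AddCommGroup X] [Module 𝕜 X] [UniformSpace X] [IsUniformAddGroup X]
    [ContinuousSMul 𝕜 X] [CompleteSpace X] [T2Space X] where
  pfam : ℕ → Seminorm 𝕜 X
  hpfam : WithSeminorms pfam
  ι : X →L[𝕜] (ℕ → 𝕜)
  hι : Function.Injective ι
  e : ℕ → X
  he : ∀ n, ι (e n) = Pi.single n 1
  w : ℕ → 𝕜
  hw : ∀ n, w (n + 1) ≠ 0
  B : X →L[𝕜] X
  hB : ∀ (x : X) (n : ℕ), ι (B x) n = w (n + 1) * ι x (n + 1)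
  hker : ∀ q : Seminorm 𝕜 X, Continuous q → ∀ m : ℕ, ∃ k, ∀ i < m, q (e (k + i)) = 0
  d : ℕ → (ℕ →₀ 𝕜)
  hd : Dense (Set.range fun j => ((d j).sum fun k c => c • e k))

namespace Ctx

variable {𝕜 X : Type*} [RCLike 𝕜]
    [AddCommGroup X] [Module 𝕜 X] [UniformSpace X] [IsUniformAddGroup X]
    [ContinuousSMul 𝕜 X] [CompleteSpace X] [T2Space X]
    (C : Ctx 𝕜 X)

/-- max of the first `n+1` seminorms -/
noncomputable def Q (n : ℕ) : Seminorm 𝕜 X := (Finset.range (n + 1)).sup C.pfam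

lemma finsetsup_cont (F : Finset ℕ) : Continuous ⇑(F.sup C.pfam) := by
  classical
  induction F using Finset.induction_on with
  | empty =>
      rw [Finset.sup_empty]
      have : ⇑(⊥ : Seminorm 𝕜 X) = fun _ => (0 : ℝ) := rfl
      rw [this]; exact continuous_const
  | @insert a F hnotmem ih =>
      rw [Finset.sup_insert]
      have h : ⇑(C.pfam a ⊔ F.sup C.pfam) = fun x => max (C.pfam a x) ((F.sup C.pfam) x) := by
        funext x; rw [Seminorm.sup_apply]
      rw [h]
      exact (C.hpfam.continuous_seminorm a).max ih

lemma Q_cont (n : ℕ) : Continuous ⇑(C.Q n) := C.finsetsup_cont _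

lemma Q_mono {n m : ℕ} (h : n ≤ m) (x : X) : C.Q n x ≤ C.Q m x := by
  have h2 : C.Q n ≤ C.Q m := Finset.sup_mono (Finset.range_subset_range.2 (by omega))
  exact h2 x

lemma pfam_le_Q (n : ℕ) (x : X) : C.pfam n x ≤ C.Q n x :=
  Finset.le_sup (f := C.pfam) (Finset.self_mem_range_succ n) x

lemma Fsup_le_Q (F : Finset ℕ) (x : X) : (F.sup C.pfam) x ≤ C.Q (F.sup id) x := by
  have h2 : F.sup C.pfam ≤ C.Q (F.sup id) :=
    Finset.sup_mono (fun k hk => Finset.mem_range.2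
      (Nat.lt_succ_of_le (Finset.le_sup (f := _root_.id) hk)))
  exact h2 x

lemma kerQ_antitone {n m : ℕ} (h : n ≤ m) :
    (C.Q m).kerSubmodule ≤ (C.Q n).kerSubmodule := by
  intro x hx
  rw [mem_ker] at *
  exact le_antisymm (hx ▸ C.Q_mono h x) (apply_nonneg _ _)

lemma kerQ_closed (m : ℕ) : IsClosed (((C.Q m).kerSubmodule : Submodule 𝕜 X) : Set X) := by
  have : (((C.Q m).kerSubmodule : Submodule 𝕜 X) : Set X) = (⇑(C.Q m)) ⁻¹' {0} := by
    ext x; simp [mem_ker, Set.mem_preimage]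
  rw [this]
  exact isClosed_singleton.preimage (C.Q_cont m)

/-- weight products -/
noncomputable def PP (n k : ℕ) : 𝕜 := ∏ t ∈ Finset.range n, C.w (k + t + 1)

lemma PP_ne (n k : ℕ) : C.PP n k ≠ 0 :=
  Finset.prod_ne_zero_iff.2 fun t _ => C.hw (k + t)

lemma PP_succ (n c : ℕ) : C.PP (n + 1) c = C.w (c + 1) * C.PP n (c + 1) := by
  rw [PP, PP, Finset.prod_range_succ']
  rw [show c + 0 + 1 = c + 1 by omega, mul_comm]
  congr 1
  exact Finset.prod_congr rfl fun t _ => congrArg C.w (by omega)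

lemma ι_pow (N : ℕ) (x : X) (c : ℕ) :
    C.ι ((C.B ^ N) x) c = C.PP N c * C.ι x (c + N) := by
  induction N generalizing x c with
  | zero => simp [PP]
  | succ n ih =>
      rw [pow_succ']
      have h1 : (C.B * C.B ^ n) x = C.B ((C.B ^ n) x) := rfl
      rw [h1, C.hB, ih, PP_succ, show c + 1 + n = c + (n + 1) by omega, mul_assoc]

lemma pow_e {N a : ℕ} (h : N ≤ a) : (C.B ^ N) (C.e a) = C.PP N (a - N) • C.e (a - N) := by
  apply C.hι
  funext c
  have h1 := C.ι_pow N (C.e a) c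
  have h2 : (C.ι (C.PP N (a - N) • C.e (a - N))) c = C.PP N (a - N) * C.ι (C.e (a - N)) c := by
    rw [map_smul]; rfl
  rw [h1, h2, C.he, C.he]
  rcases eq_or_ne c (a - N) with rfl | hne
  · rw [Pi.single_apply, Pi.single_apply, if_pos rfl, if_pos (by omega)]
  · rw [Pi.single_apply, Pi.single_apply, if_neg (by omega), if_neg (by omega), mul_zero, mul_zero]

lemma pow_e_zero {N a : ℕ} (h : a < N) : (C.B ^ N) (C.e a) = 0 := by
  apply C.hι
  funext c
  rw [map_zero, C.ι_pow, C.he, Pi.single_apply, if_neg (by omega), mul_zero]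
  rfl

/-- the target finsupp assigned to global block index `i` -/
noncomputable def tg (i : ℕ) : ℕ →₀ 𝕜 :=
  if (Nat.unpair i).2 = 0 then Finsupp.single 0 1
  else C.d (Nat.unpair ((Nat.unpair i).2 - 1)).1

/-- length bound for block `i` -/
noncomputable def deg (i : ℕ) : ℕ := ((C.tg i).support.sup id) + 1

lemma deg_pos (i : ℕ) : 0 < C.deg i := Nat.succ_pos _

lemma tg_zero_of_ge {i k : ℕ} (h : C.deg i ≤ k) : C.tg i k = 0 := by
  by_contra hne
  have hk : k ∈ (C.tg i).support := Finsupp.mem_support_iff.2 hne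
  have h2 := Finset.le_sup (f := _root_.id) hk
  have h3 : C.deg i = ((C.tg i).support.sup id) + 1 := rfl
  simp only [id] at h2
  omega

lemma supp_lt_deg {i k : ℕ} (h : k ∈ (C.tg i).support) : k < C.deg i := by
  have h2 := Finset.le_sup (f := _root_.id) h
  have h3 : C.deg i = ((C.tg i).support.sup id) + 1 := rfl
  simp only [id] at h2
  omega

/-- the start of the kernel interval for block `i`, given a required length -/
noncomputable def kk (i L : ℕ) : ℕ := (C.hker (C.Q i) (C.Q_cont i) L).choose

lemma kk_spec (i L : ℕ) : ∀ t < L, C.Q i (C.e (C.kk i L + t)) = 0 :=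
  fun t ht => (C.hker (C.Q i) (C.Q_cont i) L).choose_spec t ht

/-- `base i` = upper bound for the blocks before `i` -/
noncomputable def base (i : ℕ) : ℕ :=
  Nat.rec 0 (fun j bj => (C.kk j (bj + 1 + C.deg j) + (bj + 1)) + C.deg j) i

/-- the position of block `i` -/
noncomputable def pos (i : ℕ) : ℕ := C.kk i (C.base i + 1 + C.deg i) + (C.base i + 1)

lemma base_succ (i : ℕ) : C.base (i + 1) = C.pos i + C.deg i := rfl

lemma base_lt_pos (i : ℕ) : C.base i < C.pos i := by
  rw [pos]; omega

lemma base_mono : Monotone C.base := by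
  refine monotone_nat_of_le_succ fun i => ?_
  rw [base_succ]
  have := C.base_lt_pos i
  omega

lemma base_le_pos_add {i j : ℕ} (h : i < j) : C.pos i + C.deg i ≤ C.base j := by
  calc C.pos i + C.deg i = C.base (i + 1) := (C.base_succ i).symm
  _ ≤ C.base j := C.base_mono h

lemma pos_strictmono : StrictMono C.pos := by
  refine strictMono_nat_of_lt_succ fun i => ?_
  have h1 := C.base_le_pos_add (show i < i + 1 by omega)
  have h2 := C.base_lt_pos (i + 1)
  have h3 := C.deg_pos i
  omega

lemma lt_pos_of_lt {i j : ℕ} (h : i < j) : C.pos i + C.deg i ≤ C.base j ∧ C.base j < C.pos j :=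
  ⟨C.base_le_pos_add h, C.base_lt_pos j⟩

lemma self_le_pos (i : ℕ) : i ≤ C.pos i := by
  induction i with
  | zero => omega
  | succ n ih =>
      have := C.pos_strictmono (show n < n + 1 by omega)
      omega

/-- key kernel fact (P2): the block at `i` sits inside a `Q i`-kernel interval -/
lemma kernel_in_block {i t : ℕ} (h : t < C.deg i) : C.Q i (C.e (C.pos i + t)) = 0 := by
  have := C.kk_spec i (C.base i + 1 + C.deg i) (C.base i + 1 + t) (by omega)
  rw [pos]
  rw [show C.kk i (C.base i + 1 + C.deg i) + (C.base i + 1) + t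
      = C.kk i (C.base i + 1 + C.deg i) + (C.base i + 1 + t) by omega]
  exact this

/-- key kernel fact (P3): the block at `i` shifted down by any earlier position is still
inside a `Q i`-kernel interval -/
lemma pos_le_base {i' i : ℕ} (hi : i' < i) : C.pos i' ≤ C.base i :=
  le_trans (by omega) (C.base_le_pos_add hi)

lemma kernel_shifted {i' i t c : ℕ} (hi : i' < i) (ht : t < C.deg i)
    (hc : c + C.pos i' = C.pos i + t) : C.Q i (C.e c) = 0 := by
  have hle : C.pos i' ≤ C.base i := C.pos_le_base hi
  have hpos : C.pos i = C.kk i (C.base i + 1 + C.deg i) + (C.base i + 1) := rfl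
  have hc' : c = C.kk i (C.base i + 1 + C.deg i) + (C.base i + 1 + t - C.pos i') := by omega
  rw [hc']
  exact C.kk_spec i _ _ (by omega)


/-- the sum `∑ g k • e k` -/
noncomputable def EE (g : ℕ →₀ 𝕜) : X := g.sum fun k c => c • C.e k

/-- the block vector at global index `i` -/
noncomputable def blk (i : ℕ) : X :=
  ∑ k ∈ (C.tg i).support, ((C.tg i k) * (C.PP (C.pos i) k)⁻¹) • C.e (C.pos i + k)

lemma ι_blk (i c : ℕ) :
    C.ι (C.blk i) c =
      if C.pos i ≤ c then C.tg i (c - C.pos i) * (C.PP (C.pos i) (c - C.pos i))⁻¹ else 0 := by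
  classical
  have h1 : C.ι (C.blk i) = ∑ k ∈ (C.tg i).support,
      ((C.tg i k) * (C.PP (C.pos i) k)⁻¹) • C.ι (C.e (C.pos i + k)) := by
    rw [blk, map_sum]
    exact Finset.sum_congr rfl fun k _ => by rw [map_smul]
  have h2 : C.ι (C.blk i) c = ∑ k ∈ (C.tg i).support,
      ((C.tg i k) * (C.PP (C.pos i) k)⁻¹) * (if c = C.pos i + k then 1 else 0) := by
    rw [h1, Finset.sum_apply]
    exact Finset.sum_congr rfl fun k _ => by
      rw [Pi.smul_apply, C.he, smul_eq_mul, Pi.single_apply]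
  rw [h2]
  by_cases hle : C.pos i ≤ c
  · rw [if_pos hle]
    have h3 : ∀ k ∈ (C.tg i).support,
        ((C.tg i k) * (C.PP (C.pos i) k)⁻¹) * (if c = C.pos i + k then 1 else 0)
        = if k = c - C.pos i then (C.tg i k) * (C.PP (C.pos i) k)⁻¹ else 0 := by
      intro k _
      by_cases hk : k = c - C.pos i
      · rw [if_pos hk, if_pos (by omega), mul_one]
      · rw [if_neg hk, if_neg (by omega), mul_zero]
    rw [Finset.sum_congr rfl h3, Finset.sum_ite_eq' (C.tg i).support (c - C.pos i)]
    by_cases hmem : c - C.pos i ∈ (C.tg i).support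
    · rw [if_pos hmem]
    · rw [if_neg hmem]
      rw [Finsupp.notMem_support_iff.1 hmem, zero_mul]
  · rw [if_neg hle]
    apply Finset.sum_eq_zero
    intro k _
    rw [if_neg (by omega), mul_zero]

lemma ι_blk_zero_of_not_in {i c : ℕ} (h : ¬(C.pos i ≤ c ∧ c < C.pos i + C.deg i)) :
    C.ι (C.blk i) c = 0 := by
  rw [ι_blk]
  split_ifs with h1
  · rw [C.tg_zero_of_ge (by omega), zero_mul]
  · rfl

lemma block_disjoint {i i' c : ℕ} (hne : i ≠ i') (h1 : C.pos i ≤ c)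
    (h2 : c < C.pos i + C.deg i) : C.ι (C.blk i') c = 0 := by
  apply C.ι_blk_zero_of_not_in
  rintro ⟨g1, g2⟩
  rcases hne.lt_or_gt with hlt | hlt
  · have ha := C.base_le_pos_add hlt
    have hb := C.base_lt_pos i'
    omega
  · have ha := C.base_le_pos_add hlt
    have hb := C.base_lt_pos i
    omega

lemma blk_ker {m i : ℕ} (h : m ≤ i) : C.blk i ∈ (C.Q m).kerSubmodule :=
  Submodule.sum_mem _ fun k hk => Submodule.smul_mem _ _
    (C.kerQ_antitone h (mem_ker.2 (C.kernel_in_block (C.supp_lt_deg hk))))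

lemma pow_blk_self (i : ℕ) : (C.B ^ (C.pos i)) (C.blk i) = C.EE (C.tg i) := by
  rw [blk, map_sum, EE, Finsupp.sum]
  refine Finset.sum_congr rfl fun k hk => ?_
  rw [map_smul, C.pow_e (by omega), show C.pos i + k - C.pos i = k by omega,
    smul_smul, mul_assoc, inv_mul_cancel₀ (C.PP_ne _ _), mul_one]

lemma pow_blk_earlier {b i : ℕ} (h : b < i) : (C.B ^ (C.pos i)) (C.blk b) = 0 := by
  rw [blk, map_sum]
  apply Finset.sum_eq_zero
  intro k hk
  have ha := C.base_le_pos_add h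
  have hb := C.base_lt_pos i
  have hc := C.supp_lt_deg hk
  rw [map_smul, C.pow_e_zero (by omega), smul_zero]

lemma pow_blk_later {m i b : ℕ} (hib : i < b) (hmb : m ≤ b) :
    (C.B ^ (C.pos i)) (C.blk b) ∈ (C.Q m).kerSubmodule := by
  rw [blk, map_sum]
  refine Submodule.sum_mem _ fun k hk => ?_
  have hposle : C.pos i ≤ C.pos b + k := le_trans (C.pos_strictmono hib).le (by omega)
  rw [map_smul, C.pow_e hposle]
  refine Submodule.smul_mem _ _ (Submodule.smul_mem _ _ (mem_ker.2 ?_))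
  exact C.kerQ_antitone hmb (mem_ker.2 (C.kernel_shifted hib (C.supp_lt_deg hk)
    (by omega))) 


/-- partial sums of the series defining `x_s` -/
noncomputable def part (s J : ℕ) : X := ∑ j ∈ Finset.range J, C.blk (Nat.pair s j)

lemma part_ker {m s J : ℕ} (h : m ≤ s) : C.part s J ∈ (C.Q m).kerSubmodule :=
  Submodule.sum_mem _ fun j _ => C.blk_ker (le_trans h (Nat.left_le_pair s j))

lemma part_diff_ker {s m J J' : ℕ} (hm : m ≤ J) (hJ : J ≤ J') :
    C.part s J' - C.part s J ∈ (C.Q m).kerSubmodule := by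
  classical
  have hsub : Finset.range J ⊆ Finset.range J' := Finset.range_subset_range.2 hJ
  have hsplit := Finset.sum_sdiff (f := fun j => C.blk (Nat.pair s j)) hsub
  have : C.part s J' - C.part s J
      = ∑ j ∈ Finset.range J' \ Finset.range J, C.blk (Nat.pair s j) := by
    rw [part, part, ← hsplit]; abel
  rw [this]
  refine Submodule.sum_mem _ fun j hj => C.blk_ker ?_
  rw [Finset.mem_sdiff, Finset.mem_range, Finset.mem_range] at hj
  exact le_trans (by omega) (Nat.right_le_pair s j)

lemma cauchy_of_ker {u : ℕ → X}
    (h : ∀ m J J', m ≤ J → J ≤ J' → u J' - u J ∈ (C.Q m).kerSubmodule) : CauchySeq u := by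
  rw [cauchySeq_iff]
  intro V hV
  rw [uniformity_eq_comap_nhds_zero X] at hV
  obtain ⟨W, hW, hWV⟩ := Filter.mem_comap.1 hV
  obtain ⟨⟨F, r⟩, hr, hsub⟩ := C.hpfam.hasBasis_zero_ball.mem_iff.1 hW
  refine ⟨F.sup id, fun k hk l hl => hWV ?_⟩
  have hker : u l - u k ∈ (C.Q (F.sup id)).kerSubmodule := by
    rcases le_total k l with hkl | hlk
    · exact h _ _ _ hk hkl
    · have := h _ _ _ hl hlk
      have h2 := Submodule.neg_mem _ this
      rwa [neg_sub] at h2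
  refine Set.mem_preimage.2 (hsub ?_)
  rw [Seminorm.mem_ball_zero]
  calc (F.sup C.pfam) (u l - u k) ≤ C.Q (F.sup id) (u l - u k) := C.Fsup_le_Q F _
  _ = 0 := mem_ker.1 hker
  _ < r := hr

lemma part_cauchy (s : ℕ) : CauchySeq (C.part s) :=
  C.cauchy_of_ker fun _ _ _ hm hJ => C.part_diff_ker hm hJ

/-- the vector `x_s` -/
noncomputable def xx (s : ℕ) : X :=
  (cauchySeq_tendsto_of_complete (C.part_cauchy s)).choose

lemma xx_tendsto (s : ℕ) : Tendsto (C.part s) atTop (𝓝 (C.xx s)) :=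
  (cauchySeq_tendsto_of_complete (C.part_cauchy s)).choose_spec

lemma xx_ker {m s : ℕ} (h : m ≤ s) : C.xx s ∈ (C.Q m).kerSubmodule :=
  (C.kerQ_closed m).mem_of_tendsto (C.xx_tendsto s)
    (Eventually.of_forall fun _ => C.part_ker h)

lemma ι_part (s J c : ℕ) :
    C.ι (C.part s J) c = ∑ j ∈ Finset.range J, C.ι (C.blk (Nat.pair s j)) c := by
  rw [part, map_sum, Finset.sum_apply]

lemma ι_xx (s c : ℕ) : C.ι (C.xx s) c = C.ι (C.part s (c + 1)) c := by
  have h1 : Tendsto (fun J => C.ι (C.part s J) c) atTop (𝓝 (C.ι (C.xx s) c)) :=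
    (((continuous_apply c).comp C.ι.continuous).tendsto (C.xx s)).comp (C.xx_tendsto s)
  have h2 : ∀ J ≥ c + 1, C.ι (C.part s J) c = C.ι (C.part s (c + 1)) c := by
    intro J hJ
    rw [ι_part, ι_part]
    refine (Finset.sum_subset (Finset.range_subset_range.2 hJ) fun j _ hj => ?_).symm
    rw [Finset.mem_range, not_lt] at hj
    refine C.ι_blk_zero_of_not_in fun hmem => ?_
    have := le_trans (Nat.right_le_pair s j) (C.self_le_pos (Nat.pair s j))
    omega
  have h3 : Tendsto (fun J => C.ι (C.part s J) c) atTop (𝓝 (C.ι (C.part s (c + 1)) c)) :=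
    tendsto_const_nhds.congr' (eventually_atTop.2 ⟨c + 1, fun J hJ => (h2 J hJ).symm⟩)
  exact tendsto_nhds_unique h1 h3

lemma ι_xx_eq_sum (s c : ℕ) :
    C.ι (C.xx s) c = ∑ j ∈ Finset.range (c + 1), C.ι (C.blk (Nat.pair s j)) c := by
  rw [ι_xx, ι_part]

lemma ι_xx_in_block {s i c : ℕ} (h1 : C.pos i ≤ c) (h2 : c < C.pos i + C.deg i)
    (hs : (Nat.unpair i).1 = s) : C.ι (C.xx s) c = C.ι (C.blk i) c := by
  rw [ι_xx_eq_sum]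
  have hj : Nat.pair s ((Nat.unpair i).2) = i := by rw [← hs]; exact Nat.pair_unpair i
  rw [Finset.sum_eq_single ((Nat.unpair i).2)]
  · rw [hj]
  · intro j _ hne
    refine C.block_disjoint (fun hii => hne ?_) h1 h2
    have h5 : Nat.pair s ((Nat.unpair i).2) = Nat.pair s j := by rw [hj, hii]
    exact ((Nat.pair_eq_pair.1 h5).2).symm
  · intro hnot
    exfalso
    have ha := Nat.unpair_right_le i
    have hb := C.self_le_pos i
    exact hnot (Finset.mem_range.2 (by omega))

lemma ι_xx_other {s i c : ℕ} (h1 : C.pos i ≤ c) (h2 : c < C.pos i + C.deg i)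
    (hs : (Nat.unpair i).1 ≠ s) : C.ι (C.xx s) c = 0 := by
  rw [ι_xx_eq_sum]
  refine Finset.sum_eq_zero fun j _ => C.block_disjoint (fun hii => hs ?_) h1 h2
  rw [hii, Nat.unpair_pair]

lemma ι_xx_outside {s c : ℕ} (h : ∀ i, ¬(C.pos i ≤ c ∧ c < C.pos i + C.deg i)) :
    C.ι (C.xx s) c = 0 := by
  rw [ι_xx_eq_sum]
  exact Finset.sum_eq_zero fun j _ => C.ι_blk_zero_of_not_in (h _)

/-- the marker coordinate of `x_s` -/
noncomputable def mk0 (s : ℕ) : ℕ := C.pos (Nat.pair s 0)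

/-- the marker value of `x_s` -/
noncomputable def Wm (s : ℕ) : 𝕜 := (C.PP (C.mk0 s) 0)⁻¹

lemma Wm_ne (s : ℕ) : C.Wm s ≠ 0 := inv_ne_zero (C.PP_ne _ _)

lemma tg_pair_zero (s : ℕ) : C.tg (Nat.pair s 0) = Finsupp.single 0 1 := by
  rw [tg, Nat.unpair_pair]
  simp

lemma deg_pair_zero (s : ℕ) : C.deg (Nat.pair s 0) = 1 := by
  rw [deg, tg_pair_zero, Finsupp.support_single_ne_zero 0 one_ne_zero]
  rfl

lemma ι_blk_marker (s : ℕ) : C.ι (C.blk (Nat.pair s 0)) (C.mk0 s) = C.Wm s := by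
  have h0 : C.mk0 s = C.pos (Nat.pair s 0) := rfl
  rw [h0, ι_blk, if_pos le_rfl, Nat.sub_self, tg_pair_zero, Wm, h0]
  simp

lemma ι_xx_marker (s : ℕ) : C.ι (C.xx s) (C.mk0 s) = C.Wm s := by
  have h := C.ι_xx_in_block (i := Nat.pair s 0) (c := C.mk0 s) le_rfl
    (by have := C.deg_pos (Nat.pair s 0); have h0 : C.mk0 s = C.pos (Nat.pair s 0) := rfl; omega)
    (by rw [Nat.unpair_pair])
  rw [h, ι_blk_marker]

lemma ι_xx_marker_other {s t : ℕ} (h : t ≠ s) : C.ι (C.xx t) (C.mk0 s) = 0 := by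
  refine C.ι_xx_other (i := Nat.pair s 0) le_rfl
    (by have := C.deg_pos (Nat.pair s 0); have h0 : C.mk0 s = C.pos (Nat.pair s 0) := rfl; omega)
    (by rw [Nat.unpair_pair]; exact fun hh => h hh.symm)

/-- the coefficient functional associated with `x_s` -/
noncomputable def lam (s : ℕ) : X →L[𝕜] 𝕜 :=
  (C.Wm s)⁻¹ • ((ContinuousLinearMap.proj (C.mk0 s)).comp C.ι)

lemma lam_apply (s : ℕ) (z : X) : C.lam s z = (C.Wm s)⁻¹ * C.ι z (C.mk0 s) := rfl

lemma lam_xx (s t : ℕ) : C.lam t (C.xx s) = if s = t then 1 else 0 := by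
  rw [lam_apply]
  split_ifs with hst
  · subst hst
    rw [ι_xx_marker, inv_mul_cancel₀ (C.Wm_ne s)]
  · rw [C.ι_xx_marker_other hst, mul_zero]


/-- the candidate hypercyclic subspace -/
noncomputable def MM : Submodule 𝕜 X := (Submodule.span 𝕜 (Set.range C.xx)).topologicalClosure

lemma xx_mem_MM (s : ℕ) : C.xx s ∈ C.MM :=
  Submodule.le_topologicalClosure _ (Submodule.subset_span (Set.mem_range_self s))

lemma MM_isClosed : IsClosed (C.MM : Set X) := Submodule.isClosed_topologicalClosure _

/-- the coordinate functionals -/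
noncomputable def cf (c : ℕ) : X →L[𝕜] 𝕜 := (ContinuousLinearMap.proj c).comp C.ι

lemma cf_apply (c : ℕ) (z : X) : C.cf c z = C.ι z c := rfl

lemma key_mem_kernel {f : X →L[𝕜] 𝕜} (hf : ∀ s, f (C.xx s) = 0) {z : X} (hz : z ∈ C.MM) :
    f z = 0 := by
  have hcl : IsClosed ((LinearMap.ker f.toLinearMap : Submodule 𝕜 X) : Set X) := by
    have : ((LinearMap.ker f.toLinearMap : Submodule 𝕜 X) : Set X) = ⇑f ⁻¹' {0} := by
      ext x
      simp [LinearMap.mem_ker]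
    rw [this]
    exact isClosed_singleton.preimage f.continuous
  have hle : C.MM ≤ LinearMap.ker f.toLinearMap := by
    refine Submodule.topologicalClosure_minimal _ (Submodule.span_le.2 ?_) hcl
    rintro - ⟨s, rfl⟩
    exact LinearMap.mem_ker.2 (hf s)
  exact LinearMap.mem_ker.1 (hle hz)

lemma key_block {z : X} (hz : z ∈ C.MM) {i c : ℕ} (h1 : C.pos i ≤ c)
    (h2 : c < C.pos i + C.deg i) :
    C.ι z c = C.lam ((Nat.unpair i).1) z * C.ι (C.blk i) c := by
  set s := (Nat.unpair i).1 with hs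
  set f : X →L[𝕜] 𝕜 := C.cf c - (C.ι (C.blk i) c) • C.lam s with hfdef
  have happ : ∀ u : X, f u = C.ι u c - C.ι (C.blk i) c * C.lam s u := by
    intro u
    rw [hfdef]
    simp [cf_apply, smul_eq_mul]
  have hf : ∀ t, f (C.xx t) = 0 := by
    intro t
    rw [happ, lam_xx]
    rcases eq_or_ne t s with rfl | hne
    · rw [if_pos rfl, mul_one, C.ι_xx_in_block h1 h2 hs.symm, sub_self]
    · rw [if_neg (fun hh => hne hh), mul_zero, C.ι_xx_other h1 h2 (fun hh => hne hh.symm),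
        sub_zero]
  have h0 := C.key_mem_kernel hf hz
  rw [happ, sub_eq_zero] at h0
  rw [h0, mul_comm]

lemma key_outside {z : X} (hz : z ∈ C.MM) {c : ℕ}
    (h : ∀ i, ¬(C.pos i ≤ c ∧ c < C.pos i + C.deg i)) : C.ι z c = 0 := by
  have h0 := C.key_mem_kernel (f := C.cf c) (fun t => C.ι_xx_outside h) hz
  rwa [cf_apply] at h0

/-- partial sums of the representation of `z` in terms of the `x_s` -/
noncomputable def zpart (z : X) (S : ℕ) : X := ∑ s ∈ Finset.range S, (C.lam s z) • C.xx s

lemma zpart_mem_MM (z : X) (S : ℕ) : C.zpart z S ∈ C.MM :=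
  Submodule.sum_mem _ fun s _ => Submodule.smul_mem _ _ (C.xx_mem_MM s)

lemma zpart_diff_ker (z : X) {m S S' : ℕ} (hm : m ≤ S) (hS : S ≤ S') :
    C.zpart z S' - C.zpart z S ∈ (C.Q m).kerSubmodule := by
  classical
  have hsub : Finset.range S ⊆ Finset.range S' := Finset.range_subset_range.2 hS
  have hsplit := Finset.sum_sdiff (f := fun s => (C.lam s z) • C.xx s) hsub
  have heq : C.zpart z S' - C.zpart z S
      = ∑ s ∈ Finset.range S' \ Finset.range S, (C.lam s z) • C.xx s := by
    rw [zpart, zpart, ← hsplit]; abel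
  rw [heq]
  refine Submodule.sum_mem _ fun s hs => Submodule.smul_mem _ _ (C.xx_ker ?_)
  rw [Finset.mem_sdiff, Finset.mem_range, Finset.mem_range] at hs
  omega

lemma lam_zpart {z : X} {t S : ℕ} (h : t < S) : C.lam t (C.zpart z S) = C.lam t z := by
  classical
  rw [zpart, map_sum]
  have h1 : ∀ s ∈ Finset.range S, C.lam t ((C.lam s z) • C.xx s)
      = if s = t then C.lam t z else 0 := by
    intro s _
    rw [map_smul, smul_eq_mul, lam_xx]
    split_ifs with hst
    · subst hst; rw [mul_one]
    · rw [mul_zero]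
  rw [Finset.sum_congr rfl h1, Finset.sum_ite_eq' (Finset.range S) t]
  rw [if_pos (Finset.mem_range.2 h)]

lemma rep {z : X} (hz : z ∈ C.MM) : Tendsto (C.zpart z) atTop (𝓝 z) := by
  obtain ⟨u, hu⟩ := cauchySeq_tendsto_of_complete
    (C.cauchy_of_ker fun m S S' hm hS => C.zpart_diff_ker z hm hS)
  have hu_mm : u ∈ C.MM :=
    (C.MM_isClosed).mem_of_tendsto hu (Eventually.of_forall fun S => C.zpart_mem_MM z S)
  have lam_u : ∀ t, C.lam t u = C.lam t z := by
    intro t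
    have h1 : Tendsto (fun S => C.lam t (C.zpart z S)) atTop (𝓝 (C.lam t u)) :=
      ((C.lam t).continuous.tendsto u).comp hu
    have h2 : Tendsto (fun S => C.lam t (C.zpart z S)) atTop (𝓝 (C.lam t z)) :=
      tendsto_const_nhds.congr'
        (eventually_atTop.2 ⟨t + 1, fun S hS => (C.lam_zpart (by omega)).symm⟩)
    exact tendsto_nhds_unique h1 h2
  have hzu : z = u := by
    have hd_mm : z - u ∈ C.MM := Submodule.sub_mem _ hz hu_mm
    have hlamd : ∀ t, C.lam t (z - u) = 0 := by
      intro t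
      rw [map_sub, lam_u, sub_self]
    have hιd : C.ι (z - u) = C.ι 0 := by
      rw [map_zero]
      funext c
      by_cases hc : ∃ i, C.pos i ≤ c ∧ c < C.pos i + C.deg i
      · obtain ⟨i, hi1, hi2⟩ := hc
        rw [C.key_block hd_mm hi1 hi2, hlamd, zero_mul]
        rfl
      · push_neg at hc
        have := C.key_outside hd_mm (fun i => by
          intro hcon
          exact absurd hcon.2 (not_lt.2 (hc i hcon.1)))
        rw [this]
        rfl
    have := C.hι hιd
    have h0 : z - u = 0 := this
    rw [sub_eq_zero] at h0
    exact h0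
  rwa [← hzu] at hu

lemma exists_lam_ne {z : X} (hz : z ∈ C.MM) (hz0 : z ≠ 0) : ∃ s, C.lam s z ≠ 0 := by
  by_contra hall
  push_neg at hall
  have h1 : ∀ S, C.zpart z S = 0 := by
    intro S
    rw [zpart]
    exact Finset.sum_eq_zero fun s _ => by rw [hall s, zero_smul]
  have h2 : Tendsto (C.zpart z) atTop (𝓝 (0 : X)) :=
    tendsto_const_nhds.congr fun S => (h1 S).symm
  exact hz0 (tendsto_nhds_unique (C.rep hz) h2)


lemma pow_part_other {i m t J : ℕ} (hmi : m ≤ i) (ht : t ≠ (Nat.unpair i).1) :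
    (C.B ^ (C.pos i)) (C.part t J) ∈ (C.Q m).kerSubmodule := by
  rw [part, map_sum]
  refine Submodule.sum_mem _ fun j _ => ?_
  rcases lt_trichotomy (Nat.pair t j) i with hlt | heq | hgt
  · rw [C.pow_blk_earlier hlt]
    exact Submodule.zero_mem _
  · exfalso
    apply ht
    rw [← heq, Nat.unpair_pair]
  · exact C.pow_blk_later hgt (by omega)

lemma pow_xx_other {i m t : ℕ} (hmi : m ≤ i) (ht : t ≠ (Nat.unpair i).1) :
    (C.B ^ (C.pos i)) (C.xx t) ∈ (C.Q m).kerSubmodule := by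
  refine (C.kerQ_closed m).mem_of_tendsto
    (((C.B ^ (C.pos i)).continuous.tendsto _).comp (C.xx_tendsto t))
    (Eventually.of_forall fun J => C.pow_part_other hmi ht)

lemma pow_xx_self {i m : ℕ} (hmi : m ≤ i) :
    (C.B ^ (C.pos i)) (C.xx ((Nat.unpair i).1)) - C.EE (C.tg i) ∈ (C.Q m).kerSubmodule := by
  classical
  set s := (Nat.unpair i).1 with hs
  set j0 := (Nat.unpair i).2 with hj0
  have hpair : Nat.pair s j0 = i := Nat.pair_unpair i
  have htend : Tendsto (fun J => (C.B ^ (C.pos i)) (C.part s J) - C.EE (C.tg i)) atTop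
      (𝓝 ((C.B ^ (C.pos i)) (C.xx s) - C.EE (C.tg i))) :=
    ((((C.B ^ (C.pos i)).continuous.tendsto _).comp (C.xx_tendsto s)).sub_const _)
  refine (C.kerQ_closed m).mem_of_tendsto htend (eventually_atTop.2 ⟨j0 + 1, fun J hJ => ?_⟩)
  have hmem : j0 ∈ Finset.range J := Finset.mem_range.2 (by omega)
  have hsplit : (C.B ^ (C.pos i)) (C.part s J) - C.EE (C.tg i)
      = ∑ j ∈ Finset.range J \ {j0}, (C.B ^ (C.pos i)) (C.blk (Nat.pair s j)) := by
    rw [part, map_sum, Finset.sum_eq_sum_sdiff_singleton_add hmem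
      (fun j => (C.B ^ (C.pos i)) (C.blk (Nat.pair s j))), hpair, C.pow_blk_self]
    abel
  rw [hsplit]
  refine Submodule.sum_mem _ fun j hj => ?_
  rw [Finset.mem_sdiff, Finset.mem_singleton] at hj
  have hne : Nat.pair s j ≠ i := by
    rw [← hpair]
    intro hcon
    exact hj.2 (Nat.pair_eq_pair.1 hcon).2
  rcases hne.lt_or_gt with hlt | hgt
  · rw [C.pow_blk_earlier hlt]
    exact Submodule.zero_mem _
  · exact C.pow_blk_later hgt (by omega)

lemma pow_z {z : X} (hz : z ∈ C.MM) {i m : ℕ} (hmi : m ≤ i) :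
    (C.B ^ (C.pos i)) z - (C.lam ((Nat.unpair i).1) z) • C.EE (C.tg i)
      ∈ (C.Q m).kerSubmodule := by
  classical
  set s := (Nat.unpair i).1 with hs
  have htend : Tendsto
      (fun S => (C.B ^ (C.pos i)) (C.zpart z S) - (C.lam s z) • C.EE (C.tg i)) atTop
      (𝓝 ((C.B ^ (C.pos i)) z - (C.lam s z) • C.EE (C.tg i))) :=
    ((((C.B ^ (C.pos i)).continuous.tendsto _).comp (C.rep hz)).sub_const _)
  refine (C.kerQ_closed m).mem_of_tendsto htend (eventually_atTop.2 ⟨s + 1, fun S hS => ?_⟩)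
  have hmem : s ∈ Finset.range S := Finset.mem_range.2 (by omega)
  have h1 : ∀ t ∈ Finset.range S,
      (C.lam t z) • ((C.B ^ (C.pos i)) (C.xx t) - (if t = s then C.EE (C.tg i) else 0))
      = (C.B ^ (C.pos i)) ((C.lam t z) • C.xx t)
        - (if t = s then (C.lam s z) • C.EE (C.tg i) else 0) := by
    intro t _
    rw [smul_sub, map_smul]
    congr 1
    split_ifs with hts
    · subst hts; rfl
    · rw [smul_zero]
  have hsplit : ∑ t ∈ Finset.range S,
      (C.lam t z) • ((C.B ^ (C.pos i)) (C.xx t) - (if t = s then C.EE (C.tg i) else 0))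
      = (C.B ^ (C.pos i)) (C.zpart z S) - (C.lam s z) • C.EE (C.tg i) := by
    rw [Finset.sum_congr rfl h1, Finset.sum_sub_distrib, ← map_sum,
      Finset.sum_ite_eq' (Finset.range S) s, if_pos hmem]
    rw [zpart]
  rw [← hsplit]
  refine Submodule.sum_mem _ fun t _ => Submodule.smul_mem _ _ ?_
  split_ifs with hts
  · subst hts
    exact C.pow_xx_self hmi
  · rw [sub_zero]
    exact C.pow_xx_other hmi hts


lemma tg_pair_succ (s j : ℕ) : C.tg (Nat.pair s (j + 1)) = C.d ((Nat.unpair j).1) := by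
  rw [tg, Nat.unpair_pair]
  simp

lemma orbit_dense {z : X} (hz : z ∈ C.MM) (hz0 : z ≠ 0) :
    Dense (Set.range fun n : ℕ => (C.B ^ n) z) := by
  obtain ⟨s, hlam⟩ := C.exists_lam_ne hz hz0
  intro y
  refine mem_closure_iff_nhds.2 fun U hU => ?_
  have hU0 : (fun x => y + x) ⁻¹' U ∈ 𝓝 (0 : X) := by
    rw [← map_add_left_nhds_zero y] at hU
    exact Filter.mem_map.1 hU
  obtain ⟨⟨F, r⟩, hr, hball⟩ := C.hpfam.hasBasis_zero_ball.mem_iff.1 hU0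
  simp only at hr hball
  set m := F.sup id with hm
  set lz := C.lam s z with hlz
  have hnorm : 0 < ‖lz‖ := norm_pos_iff.2 hlam
  set ytgt := lz⁻¹ • y with hytgt
  set ε := r / ‖lz‖ with hε
  have hεpos : 0 < ε := div_pos hr hnorm
  have hV : {u : X | C.Q m (u - ytgt) < ε} ∈ 𝓝 ytgt := by
    have hcont : Continuous fun u : X => C.Q m (u - ytgt) :=
      (C.Q_cont m).comp (continuous_id.sub continuous_const)
    have hopen : IsOpen {u : X | C.Q m (u - ytgt) < ε} :=
      isOpen_lt hcont continuous_const
    refine hopen.mem_nhds ?_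
    simp only [Set.mem_setOf_eq, sub_self, map_zero]
    exact hεpos
  obtain ⟨v, hv1, hv2⟩ := mem_closure_iff_nhds.1 (C.hd ytgt) _ hV
  obtain ⟨a, ha⟩ := hv2
  have hvEE : C.EE (C.d a) = v := ha
  set i := Nat.pair s (Nat.pair a m + 1) with hi
  have hui1 : (Nat.unpair i).1 = s := by rw [hi, Nat.unpair_pair]
  have hui2 : (Nat.unpair i).2 = Nat.pair a m + 1 := by rw [hi, Nat.unpair_pair]
  have hmi : m ≤ i := by
    have h1 := Nat.right_le_pair a m
    have h2 := Nat.right_le_pair s (Nat.pair a m + 1)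
    omega
  have htg : C.tg i = C.d a := by
    rw [hi, tg_pair_succ, Nat.unpair_pair]
  have hker0 := C.pow_z hz hmi
  rw [hui1, htg, ← hlz] at hker0
  have hkey : C.Q m ((C.B ^ (C.pos i)) z - y) < r := by
    have h0 : C.Q m ((C.B ^ (C.pos i)) z - lz • C.EE (C.d a)) = 0 := mem_ker.1 hker0
    have h2 : C.Q m (lz • C.EE (C.d a) - y) = ‖lz‖ * C.Q m (C.EE (C.d a) - ytgt) := by
      have heq : lz • C.EE (C.d a) - y = lz • (C.EE (C.d a) - ytgt) := by
        rw [smul_sub, hytgt, smul_inv_smul₀ hlam]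
      rw [heq, map_smul_eq_mul]
    have h3 : C.Q m (C.EE (C.d a) - ytgt) < ε := by
      rw [hvEE]
      exact hv1
    have htri : C.Q m ((C.B ^ (C.pos i)) z - y)
        ≤ C.Q m ((C.B ^ (C.pos i)) z - lz • C.EE (C.d a)) + C.Q m (lz • C.EE (C.d a) - y) := by
      have harr : (C.B ^ (C.pos i)) z - y
          = ((C.B ^ (C.pos i)) z - lz • C.EE (C.d a)) + (lz • C.EE (C.d a) - y) := by abel
      rw [harr]
      exact map_add_le_add _ _ _
    calc C.Q m ((C.B ^ (C.pos i)) z - y)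
        ≤ C.Q m ((C.B ^ (C.pos i)) z - lz • C.EE (C.d a)) + C.Q m (lz • C.EE (C.d a) - y) := htri
      _ = ‖lz‖ * C.Q m (C.EE (C.d a) - ytgt) := by rw [h0, h2, zero_add]
      _ < ‖lz‖ * ε := by exact (mul_lt_mul_iff_right₀ hnorm).2 h3
      _ = r := by rw [hε]; field_simp
  have hmemball : (C.B ^ (C.pos i)) z - y ∈ Seminorm.ball (F.sup C.pfam) 0 r := by
    rw [Seminorm.mem_ball_zero]
    exact lt_of_le_of_lt (C.Fsup_le_Q F _) hkey
  have hmemU : (C.B ^ (C.pos i)) z ∈ U := by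
    have := hball hmemball
    simpa using this
  exact ⟨(C.B ^ (C.pos i)) z, hmemU, Set.mem_range_self _⟩


lemma xx_indep (n0 : ℕ) : LinearIndependent 𝕜 (fun s : ℕ => C.xx (s + n0)) := by
  classical
  rw [linearIndependent_iff]
  intro l hl
  ext t
  have h0 : C.lam (t + n0) (Finsupp.linearCombination 𝕜 (fun s : ℕ => C.xx (s + n0)) l) = 0 := by
    rw [hl, map_zero]
  rw [Finsupp.linearCombination_apply, Finsupp.sum, map_sum] at h0
  have h1 : ∀ s ∈ l.support, C.lam (t + n0) (l s • C.xx (s + n0))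
      = if s = t then l s else 0 := by
    intro s _
    rw [map_smul, smul_eq_mul, lam_xx]
    by_cases hst : s = t
    · rw [if_pos (by omega), if_pos hst, mul_one]
    · rw [if_neg (by omega), if_neg hst, mul_zero]
  rw [Finset.sum_congr rfl h1, Finset.sum_ite_eq' l.support t] at h0
  by_cases hmem : t ∈ l.support
  · rw [if_pos hmem] at h0
    exact h0
  · exact Finsupp.notMem_support_iff.1 hmem

lemma not_finite_of_contains (V : Submodule 𝕜 X) (n0 : ℕ)
    (h : ∀ s : ℕ, C.xx (s + n0) ∈ V) : ¬ Module.Finite 𝕜 V := by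
  intro hfin
  have hind : LinearIndependent 𝕜 (fun s : ℕ => (⟨C.xx (s + n0), h s⟩ : V)) := by
    apply LinearIndependent.of_comp V.subtype
    exact C.xx_indep n0
  exact absurd hind.aleph0_le_rank (not_le.2 (Module.rank_lt_aleph0 𝕜 V))

end Ctx

lemma exists_dense_seq {𝕜 X : Type*} [RCLike 𝕜]
    [AddCommGroup X] [Module 𝕜 X] [UniformSpace X] [IsUniformAddGroup X]
    [ContinuousSMul 𝕜 X]
    (e : ℕ → X) (hdense : Dense ((Submodule.span 𝕜 (Set.range e) : Submodule 𝕜 X) : Set X)) :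
    ∃ d : ℕ → (ℕ →₀ 𝕜), Dense (Set.range fun j => ((d j).sum fun k c => c • e k)) := by
  classical
  obtain ⟨u, hu⟩ := exists_surjective_nat (ℕ →₀ ℕ)
  set c0 : ℕ → 𝕜 := TopologicalSpace.denseSeq 𝕜 with hc0
  set ct : ℕ → 𝕜 := fun n => if n = 0 then 0 else c0 (n - 1) with hct
  have hct0 : ct 0 = 0 := if_pos rfl
  have hctdense : Dense (Set.range ct) := by
    have hsub : Set.range c0 ⊆ Set.range ct := by
      rintro - ⟨mm, rfl⟩
      exact ⟨mm + 1, by simp [hct]⟩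
    intro x
    exact closure_mono hsub (TopologicalSpace.denseRange_denseSeq 𝕜 x)
  set d : ℕ → (ℕ →₀ 𝕜) := fun j => (u j).mapRange ct hct0 with hd
  refine ⟨d, ?_⟩
  have hsub : ((Submodule.span 𝕜 (Set.range e) : Submodule 𝕜 X) : Set X)
      ⊆ closure (Set.range fun j => ((d j).sum fun k c => c • e k)) := by
    intro x hx
    obtain ⟨g, rfl⟩ := Finsupp.mem_span_range_iff_exists_finsupp.1 hx
    set F := g.support with hF
    set Phi : (ℕ → 𝕜) → X := fun aa => ∑ k ∈ F, aa k • e k with hPhi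
    have hPhicont : Continuous Phi :=
      continuous_finset_sum _ fun k _ => (continuous_apply k).smul continuous_const
    have hx_eq : (g.sum fun k c => c • e k) = Phi ⇑g := by
      rw [Finsupp.sum]
    set A := Set.pi Set.univ (fun _ : ℕ => Set.range ct) with hA
    have hAdense : Dense A := dense_pi Set.univ fun _ _ => hctdense
    have himg : Phi '' A ⊆ Set.range fun j => ((d j).sum fun k c => c • e k) := by
      rintro - ⟨aa, haA, rfl⟩
      choose mcode hmcode using fun k => (haA k (Set.mem_univ k) : aa k ∈ Set.range ct)
      set h : ℕ →₀ ℕ := Finsupp.onFinset F (fun k => if k ∈ F then mcode k else 0)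
        (fun k hk => by by_contra hnk; simp [hnk] at hk) with hh
      obtain ⟨j, hj⟩ := hu h
      refine ⟨j, ?_⟩
      have hdj : d j = h.mapRange ct hct0 := by
        show Finsupp.mapRange ct hct0 (u j) = h.mapRange ct hct0
        rw [hj]
      show ((d j).sum fun k c => c • e k) = Phi aa
      rw [hdj]
      have hsupp : (h.mapRange ct hct0).support ⊆ F :=
        subset_trans Finsupp.support_mapRange Finsupp.support_onFinset_subset
      rw [Finsupp.sum_of_support_subset _ hsupp _ (fun k _ => zero_smul 𝕜 (e k))]
      refine Finset.sum_congr rfl fun k hk => ?_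
      rw [Finsupp.mapRange_apply]
      have hhk : h k = mcode k := by
        rw [hh]
        simp only [Finsupp.onFinset_apply]
        rw [if_pos hk]
      rw [hhk, hmcode k]
    have hstep : Phi ⇑g ∈ closure (Phi '' A) := by
      refine image_closure_subset_closure_image hPhicont ?_
      refine ⟨⇑g, ?_, rfl⟩
      rw [hAdense.closure_eq]
      trivial
    rw [hx_eq]
    exact closure_mono himg hstep
  rw [dense_iff_closure_eq]
  apply Set.eq_univ_of_univ_subset
  calc (Set.univ : Set X) = closure ((Submodule.span 𝕜 (Set.range e) : Submodule 𝕜 X) : Set X) :=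
        hdense.closure_eq.symm
    _ ⊆ closure (closure (Set.range fun j => ((d j).sum fun k c => c • e k))) :=
        closure_mono hsub
    _ = closure (Set.range fun j => ((d j).sum fun k c => c • e k)) := closure_closure

end WS

/-- Weighted backward shifts on Fréchet sequence spaces: if the finite sequences are dense
in `X` (a Fréchet space embedded continuously and injectively in `ω = 𝕜^ℕ` via `ι`) and
for every continuous seminorm `q` the set `{k : q (e k) = 0}` contains arbitrarily long
intervals, then the weighted backward shift `B` has a hypercyclic subspace of type 2. -/
theorem weighted_shift_hypercyclic_subspace_type2 {𝕜 X : Type*} [RCLike 𝕜]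
    [AddCommGroup X] [Module 𝕜 X] [UniformSpace X] [IsUniformAddGroup X]
    [ContinuousSMul 𝕜 X] [CompleteSpace X] [T2Space X]
    (pfam : ℕ → Seminorm 𝕜 X) (hpfam : WithSeminorms pfam)
    (ι : X →L[𝕜] (ℕ → 𝕜)) (hι : Function.Injective ι)
    (e : ℕ → X) (he : ∀ n, ι (e n) = Pi.single n 1)
    (hdense : Dense ((Submodule.span 𝕜 (Set.range e) : Submodule 𝕜 X) : Set X))
    (w : ℕ → 𝕜) (hw : ∀ n, w (n + 1) ≠ 0)
    (B : X →L[𝕜] X) (hB : ∀ (x : X) (n : ℕ), ι (B x) n = w (n + 1) * ι x (n + 1))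
    (hker : ∀ q : Seminorm 𝕜 X, Continuous q → ∀ m : ℕ, ∃ k, ∀ i < m, q (e (k + i)) = 0) :
    ∃ M : Submodule 𝕜 X, IsClosed (M : Set X) ∧ ¬ Module.Finite 𝕜 M ∧
      (∀ x ∈ M, x ≠ 0 → Dense (Set.range fun n : ℕ => (B ^ n) x)) ∧
      (∀ q : Seminorm 𝕜 X, Continuous q → ¬ Module.Finite 𝕜 ↥(M ⊓ q.kerSubmodule)) := by
  obtain ⟨d, hd⟩ := WS.exists_dense_seq e hdense
  let C : WS.Ctx 𝕜 X := ⟨pfam, hpfam, ι, hι, e, he, w, hw, B, hB, hker, d, hd⟩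
  refine ⟨C.MM, C.MM_isClosed, ?_, ?_, ?_⟩
  · exact C.not_finite_of_contains C.MM 0 fun s => C.xx_mem_MM (s + 0)
  · intro x hx hx0
    exact C.orbit_dense hx hx0
  · intro q hq
    obtain ⟨F, Cst, hCne, hle⟩ := Seminorm.bound_of_continuous C.hpfam q hq
    refine C.not_finite_of_contains _ (F.sup id) fun s => Submodule.mem_inf.2
      ⟨C.xx_mem_MM _, WS.mem_ker.2 ?_⟩
    have h1 : q (C.xx (s + F.sup id)) ≤ Cst • (F.sup C.pfam) (C.xx (s + F.sup id)) :=
      hle (C.xx (s + F.sup id))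
    rw [NNReal.smul_def, smul_eq_mul] at h1
    have h2 : (F.sup C.pfam) (C.xx (s + F.sup id)) ≤ C.Q (F.sup id) (C.xx (s + F.sup id)) :=
      C.Fsup_le_Q F _
    have h3 : C.Q (F.sup id) (C.xx (s + F.sup id)) = 0 :=
      WS.mem_ker.1 (C.xx_ker (by omega))
    have h4 : (0:ℝ) ≤ q (C.xx (s + F.sup id)) := apply_nonneg q _
    have h5 : (Cst : ℝ) * (F.sup C.pfam) (C.xx (s + F.sup id)) ≤ 0 := by
      have hc : (0:ℝ) ≤ (Cst : ℝ) := Cst.coe_nonneg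
      nlinarith
    linarith
end

section
/- Let X be a Fréchet sequence space containing all finite sequences, with increasing seminorms (p_j) that are monotone: if |x_k| ≤ |y_k| for all k then p_j(x) ≤ p_j(y). If there exist a weighted shift B_w mapping X into X and a continuous seminorm p on X such that {k ≥ 0 : p(e_k) = 0} does not contain arbitrarily long intervals, then X possesses a continuous norm. -/
open Filter Topology

/-- If a Fréchet sequence space `X` (embedded in `ω = 𝕜^ℕ` via `ι`, containing all finite
sequences, with increasing monotone seminorms) admits a weighted shift `B` mapping `X`
into `X` and a continuous seminorm `q` such that `{k : q (e k) = 0}` does not contain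
arbitrarily long intervals, then `X` possesses a continuous norm. -/
theorem continuous_norm_of_weighted_shift {𝕜 X : Type*} [RCLike 𝕜]
    [AddCommGroup X] [Module 𝕜 X] [UniformSpace X] [IsUniformAddGroup X]
    [ContinuousSMul 𝕜 X] [CompleteSpace X] [T2Space X]
    (p : ℕ → Seminorm 𝕜 X) (hp : WithSeminorms p) (hm : ∀ j, p j ≤ p (j + 1))
    (ι : X →L[𝕜] (ℕ → 𝕜)) (hι : Function.Injective ι)
    (e : ℕ → X) (he : ∀ n, ι (e n) = Pi.single n 1)
    (hfin : ∀ y : ℕ → 𝕜, (Function.support y).Finite → y ∈ Set.range ι)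
    (hmon : ∀ (j : ℕ) (x y : X), (∀ k, ‖ι x k‖ ≤ ‖ι y k‖) → p j x ≤ p j y)
    (w : ℕ → 𝕜) (hw : ∀ n, w (n + 1) ≠ 0)
    (B : X →ₗ[𝕜] X) (hB : ∀ (x : X) (n : ℕ), ι (B x) n = w (n + 1) * ι x (n + 1))
    (q : Seminorm 𝕜 X) (hq : Continuous q)
    (hint : ¬ ∀ m : ℕ, ∃ k, ∀ i < m, q (e (k + i)) = 0) :
    ∃ r : Seminorm 𝕜 X, Continuous r ∧ ∀ x : X, x ≠ 0 → r x ≠ 0 := by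
  push_neg at hint
  obtain ⟨m, hm2⟩ := hint
  -- hm2 : ∀ k, ∃ i < m, q (e (k + i)) ≠ 0
  -- Bound q by a single seminorm p J
  obtain ⟨s, C, hC0, hqle⟩ := Seminorm.bound_of_continuous hp q hq
  set J := s.sup id with hJ
  have hpmono : Monotone p := monotone_nat_of_le_succ hm
  have hsup : s.sup p ≤ p J := Finset.sup_le fun a ha => hpmono (Finset.le_sup (f := id) ha)
  have hqJ : ∀ x, q x ≤ C * p J x := fun x => (hqle x).trans
    (by simpa [NNReal.smul_def] using mul_le_mul_of_nonneg_left (hsup x) C.coe_nonneg)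
  have heJ : ∀ t, q (e t) ≠ 0 → p J (e t) ≠ 0 := by
    intro t hqt hpt
    exact hqt (le_antisymm (by simpa [hpt] using hqJ (e t)) (apply_nonneg _ _))
  -- choose, for each n, a coordinate k n ≤ n within distance < m where p J (e (k n)) ≠ 0
  have key : ∀ n : ℕ, ∃ k i : ℕ, i < m ∧ p J (e k) ≠ 0 ∧ (m - 1 ≤ n → k + i = n) := by
    intro n
    by_cases hn : m - 1 ≤ n
    · obtain ⟨i', hi', hq'⟩ := hm2 (n - (m - 1))
      exact ⟨n - (m - 1) + i', n - (n - (m - 1) + i'), by omega, heJ _ hq', fun _ => by omega⟩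
    · obtain ⟨i', hi', hq'⟩ := hm2 0
      exact ⟨0 + i', 0, by omega, heJ _ hq', fun h => absurd h hn⟩
  choose k i hil hpk hki using key
  -- coordinate seminorms
  let coordS : ℕ → Seminorm 𝕜 X := fun n =>
    (normSeminorm 𝕜 𝕜).comp ((LinearMap.proj n).comp (ι : X →ₗ[𝕜] ℕ → 𝕜))
  have hcoordS : ∀ n x, coordS n x = ‖ι x n‖ := fun n x => rfl
  let c : ℕ → NNReal := fun n =>
    if m - 1 ≤ n then (∏ t ∈ Finset.range (i n), ‖w (k n + t + 1)‖₊) *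
      (p J (e (k n))).toNNReal else 1
  have hc : ∀ n, c n ≠ 0 := by
    intro n
    simp only [c]
    split
    · refine mul_ne_zero ?_ ?_
      · rw [Finset.prod_ne_zero_iff]
        intro t _
        simpa using hw (k n + t)
      · exact (Real.toNNReal_pos.mpr ((apply_nonneg _ _).lt_of_ne (Ne.symm (hpk n)))).ne'
    · exact one_ne_zero
  let S : ℕ → Seminorm 𝕜 X := fun n => c n • coordS n
  have hSapp : ∀ n x, S n x = (c n : ℝ) * ‖ι x n‖ := by
    intro n x
    simp [S, hcoordS, NNReal.smul_def]
  have hScont : ∀ n, Continuous (S n) := by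
    intro n
    have : ⇑(S n) = fun x => (c n : ℝ) * ‖ι x n‖ := funext (hSapp n)
    rw [this]
    exact continuous_const.mul ((continuous_apply n).comp ι.continuous).norm
  -- coordinates of powers of B
  have hpow : ∀ (j : ℕ) (x : X) (t : ℕ),
      ι ((B ^ j) x) t = (∏ u ∈ Finset.range j, w (t + u + 1)) * ι x (t + j) := by
    intro j
    induction j with
    | zero => intro x t; simp
    | succ j ih =>
      intro x t
      rw [pow_succ, Module.End.mul_apply, ih (B x) t, hB, Finset.prod_range_succ]
      rw [mul_assoc]; norm_num [Nat.add_assoc]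
  -- key monotonicity estimate
  have hcoord : ∀ (x : X) (t : ℕ), ‖ι x t‖ * p J (e t) ≤ p J x := by
    intro x t
    have h1 : p J ((ι x t) • e t) ≤ p J x := by
      refine hmon J _ x fun u => ?_
      rw [map_smul]
      rcases eq_or_ne u t with rfl | hu
      · simp [he, Pi.smul_apply]
      · simp [he, Pi.smul_apply, Pi.single_eq_of_ne hu]
    calc ‖ι x t‖ * p J (e t) = p J ((ι x t) • e t) := (map_smul_eq_mul _ _ _).symm
    _ ≤ p J x := h1
  -- the main inequality for n ≥ m - 1
  have hmain : ∀ (x : X) (n : ℕ), m - 1 ≤ n → S n x ≤ p J ((B ^ (i n)) x) := by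
    intro x n hn
    have hkin : k n + i n = n := hki n hn
    have hcoords : ‖ι ((B ^ (i n)) x) (k n)‖ =
        (∏ u ∈ Finset.range (i n), ‖w (k n + u + 1)‖) * ‖ι x n‖ := by
      rw [hpow (i n) x (k n), hkin, norm_mul]
      congr 1
      exact norm_prod _ _
    have := hcoord ((B ^ (i n)) x) (k n)
    rw [hcoords] at this
    calc S n x = (c n : ℝ) * ‖ι x n‖ := hSapp n x
      _ = (∏ u ∈ Finset.range (i n), ‖w (k n + u + 1)‖) * ‖ι x n‖ * p J (e (k n)) := by
          simp only [c, if_pos hn]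
          push_cast [Real.coe_toNNReal _ (apply_nonneg (p J) (e (k n)))]
          ring
      _ ≤ p J ((B ^ (i n)) x) := this
  -- pointwise boundedness
  have hbdd_pt : ∀ x : X, BddAbove (Set.range fun n => S n x) := by
    intro x
    refine ⟨(∑ i' ∈ Finset.range m, p J ((B ^ i') x)) + ∑ t ∈ Finset.range m, ‖ι x t‖, ?_⟩
    rintro - ⟨n, rfl⟩
    show S n x ≤ _
    by_cases hn : m - 1 ≤ n
    · refine le_trans (hmain x n hn) (le_trans ?_ (le_add_of_nonneg_right ?_))
      · exact Finset.single_le_sum (f := fun i' => p J ((B ^ i') x))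
          (fun _ _ => apply_nonneg _ _) (Finset.mem_range.mpr (hil n))
      · exact Finset.sum_nonneg fun _ _ => norm_nonneg _
    · have hnm : n < m := by omega
      have hSn : S n x = ‖ι x n‖ := by
        rw [hSapp]
        simp only [c]
        rw [if_neg hn]
        simp
      rw [hSn]
      refine le_add_of_nonneg_of_le (Finset.sum_nonneg fun _ _ => apply_nonneg _ _) ?_
      exact Finset.single_le_sum (fun _ _ => norm_nonneg _) (Finset.mem_range.mpr hnm)
  have bdd : BddAbove (Set.range S) := Seminorm.bddAbove_range_iff.mpr hbdd_pt
  -- instances: X is Baire, hence barrelled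
  have : FirstCountableTopology X := hp.firstCountableTopology
  have : (uniformity X).IsCountablyGenerated := IsUniformAddGroup.uniformity_countably_generated
  have hco : ⇑(⨆ n, S n) = ⨆ n, ⇑(S n) := Seminorm.coe_iSup_eq bdd
  refine ⟨⨆ n, S n, by rw [hco]; exact Seminorm.continuous_iSup S hScont bdd, ?_⟩
  intro x hx hrx
  apply hx
  have happ : (⨆ n, S n) x = ⨆ n, S n x := by
    rw [show ((⨆ n, S n : Seminorm 𝕜 X) x : ℝ) = (⨆ n, ⇑(S n)) x from congrFun hco x, iSup_apply]
  have hzero : ∀ n, S n x = 0 := by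
    intro n
    have h1 : S n x ≤ (⨆ n, S n) x := by
      rw [happ]; exact le_ciSup (hbdd_pt x) n
    exact le_antisymm (h1.trans (le_of_eq hrx)) (apply_nonneg _ _)
  have hιx : ι x = 0 := by
    funext n
    have := hzero n
    rw [hSapp] at this
    have hcn : (c n : ℝ) ≠ 0 := by exact_mod_cast hc n
    have : ‖ι x n‖ = 0 := by
      rcases mul_eq_zero.mp this with h | h
      · exact absurd h hcn
      · exact h
    simpa using this
  exact hι (by rw [hιx, map_zero])
end
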